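/- (Proposition 1, WMMSE equivalence.) In the instantaneous cluster-wise pseudo-SE setup, let F be a nonempty set of precoder tuples. Then sup_{q̄ ∈ F} Σ_{k∈S} w_k · log(1 + SLINR_k(q̄)) = Σ_{k∈S} w_k − inf { J(ρ, u, q̄) : q̄ ∈ F, u ∈ ℂ^S, ρ ∈ (0,∞)^S }. Moreover, a tuple q̄* ∈ F attains the supremum of the weighted sum pseudo-SE over F if and only if the infimum of J over F × ℂ^S × (0,∞)^S is attained at (ρ*, u*, q̄*) with u*_k = b_k(q̄*)/A_k(q̄*) and ρ*_k = 1 + SLINR_k(q̄*) for every k ∈ S. -/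

import Mathlib

open scoped BigOperators

noncomputable section

variable {S S' : Type*} [Fintype S] [Fintype S'] {n : ℕ}

/-- Effective desired-signal coefficient `b_k(q̄) = ⟪g_k, q̄_k⟫`. -/
def bCoef (g : S → EuclideanSpace ℂ (Fin n)) (q : S → EuclideanSpace ℂ (Fin n)) (k : S) : ℂ :=
  inner ℂ (g k) (q k)

/-- Total received power
`A_k(q̄) = ∑_{j∈S} |⟪g_k, q̄_j⟫|² + ∑_{j∈S'} |⟪g_j, q̄_k⟫|² + σ²`. -/
def Apow (g : S → EuclideanSpace ℂ (Fin n)) (h : S' → EuclideanSpace ℂ (Fin n)) (σ : ℝ)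
    (q : S → EuclideanSpace ℂ (Fin n)) (k : S) : ℝ :=
  (∑ j, ‖(inner ℂ (g k) (q j) : ℂ)‖ ^ 2) + (∑ j, ‖(inner ℂ (h j) (q k) : ℂ)‖ ^ 2) + σ ^ 2

/-- Interference-plus-leakage-plus-noise power `D_k(q̄) = A_k(q̄) - |b_k(q̄)|²`. -/
def Dpow (g : S → EuclideanSpace ℂ (Fin n)) (h : S' → EuclideanSpace ℂ (Fin n)) (σ : ℝ)
    (q : S → EuclideanSpace ℂ (Fin n)) (k : S) : ℝ :=
  Apow g h σ q k - ‖bCoef g q k‖ ^ 2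

/-- The hybrid SLINR `SLINR_k(q̄) = |b_k(q̄)|² / D_k(q̄)`. -/
def slinr (g : S → EuclideanSpace ℂ (Fin n)) (h : S' → EuclideanSpace ℂ (Fin n)) (σ : ℝ)
    (q : S → EuclideanSpace ℂ (Fin n)) (k : S) : ℝ :=
  ‖bCoef g q k‖ ^ 2 / Dpow g h σ q k

/-- Per-user MSE `e_k(u, q̄) = |u|² A_k(q̄) - 2 Re(conj u · b_k(q̄)) + 1`. -/
def mse (g : S → EuclideanSpace ℂ (Fin n)) (h : S' → EuclideanSpace ℂ (Fin n)) (σ : ℝ)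
    (q : S → EuclideanSpace ℂ (Fin n)) (k : S) (u : ℂ) : ℝ :=
  ‖u‖ ^ 2 * Apow g h σ q k - 2 * (starRingEnd ℂ u * bCoef g q k).re + 1

/-- WMMSE objective `J(ρ, u, q̄) = ∑_{k∈S} w_k (ρ_k e_k(u_k, q̄) - log ρ_k)`. -/
def Jobj (g : S → EuclideanSpace ℂ (Fin n)) (h : S' → EuclideanSpace ℂ (Fin n)) (σ : ℝ)
    (w : S → ℝ) (ρ : S → ℝ) (u : S → ℂ) (q : S → EuclideanSpace ℂ (Fin n)) : ℝ :=
  ∑ k, w k * (ρ k * mse g h σ q k (u k) - Real.log (ρ k))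

section aux

variable (g : S → EuclideanSpace ℂ (Fin n)) (h : S' → EuclideanSpace ℂ (Fin n)) {σ : ℝ}

lemma Dpow_pos (hσ : 0 < σ) (q : S → EuclideanSpace ℂ (Fin n)) (k : S) :
    0 < Dpow g h σ q k := by
  have h1 : ‖bCoef g q k‖ ^ 2 ≤ ∑ j, ‖(inner ℂ (g k) (q j) : ℂ)‖ ^ 2 := by
    have := Finset.single_le_sum (f := fun j => ‖(inner ℂ (g k) (q j) : ℂ)‖ ^ 2)
      (fun j _ => sq_nonneg _) (Finset.mem_univ k)
    simpa [bCoef] using this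
  have h2 : (0:ℝ) ≤ ∑ j, ‖(inner ℂ (h j) (q k) : ℂ)‖ ^ 2 :=
    Finset.sum_nonneg fun j _ => sq_nonneg _
  have h3 : 0 < σ ^ 2 := by positivity
  unfold Dpow Apow
  linarith

lemma Apow_pos (hσ : 0 < σ) (q : S → EuclideanSpace ℂ (Fin n)) (k : S) :
    0 < Apow g h σ q k := by
  have h1 := Dpow_pos g h hσ q k
  have h2 := sq_nonneg ‖bCoef g q k‖
  unfold Dpow at h1
  linarith

lemma one_add_slinr (hσ : 0 < σ) (q : S → EuclideanSpace ℂ (Fin n)) (k : S) :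
    1 + slinr g h σ q k = Apow g h σ q k / Dpow g h σ q k := by
  have hD := Dpow_pos g h hσ q k
  have hA' : Apow g h σ q k = Dpow g h σ q k + ‖bCoef g q k‖ ^ 2 := by unfold Dpow; ring
  rw [slinr, hA', add_div, div_self (ne_of_gt hD)]

lemma mse_ge (hσ : 0 < σ) (q : S → EuclideanSpace ℂ (Fin n)) (k : S) (u : ℂ) :
    Dpow g h σ q k / Apow g h σ q k ≤ mse g h σ q k u := by
  have hA := Apow_pos g h hσ q k
  rw [div_le_iff₀ hA]
  set A := Apow g h σ q k
  set b := bCoef g q k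
  have h1 : ‖u‖ ^ 2 = u.re ^ 2 + u.im ^ 2 := by
    rw [Complex.sq_norm, Complex.normSq_apply]; ring
  have h2 : (starRingEnd ℂ u * b).re = u.re * b.re + u.im * b.im := by
    simp [Complex.mul_re]
  have h3 : ‖b‖ ^ 2 = b.re ^ 2 + b.im ^ 2 := by
    rw [Complex.sq_norm, Complex.normSq_apply]; ring
  rw [show Dpow g h σ q k = A - ‖b‖ ^ 2 from rfl]
  unfold mse
  rw [h1, h2, h3]
  nlinarith [sq_nonneg (A * u.re - b.re), sq_nonneg (A * u.im - b.im), hA]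

lemma mse_star (hσ : 0 < σ) (q : S → EuclideanSpace ℂ (Fin n)) (k : S) :
    mse g h σ q k (bCoef g q k / ((Apow g h σ q k : ℝ) : ℂ)) =
      Dpow g h σ q k / Apow g h σ q k := by
  have hA := Apow_pos g h hσ q k
  set A := Apow g h σ q k
  set b := bCoef g q k
  have hA0 : A ≠ 0 := ne_of_gt hA
  have h1 : ‖b / ((A:ℝ):ℂ)‖ ^ 2 = ‖b‖ ^ 2 / A ^ 2 := by
    rw [norm_div, div_pow, Complex.norm_real, Real.norm_eq_abs, abs_of_pos hA]
  have h2 : (starRingEnd ℂ (b / ((A:ℝ):ℂ)) * b).re = ‖b‖ ^ 2 / A := by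
    rw [map_div₀, Complex.conj_ofReal, div_mul_eq_mul_div, Complex.div_ofReal_re]
    congr 1
    rw [Complex.sq_norm, Complex.normSq_apply, Complex.mul_re]
    simp [Complex.conj_re, Complex.conj_im]
  unfold mse
  rw [h1, h2, show Dpow g h σ q k = A - ‖b‖ ^ 2 from rfl]
  field_simp
  ring

lemma term_ge (hσ : 0 < σ) (q : S → EuclideanSpace ℂ (Fin n)) (k : S) (u : ℂ)
    {ρ : ℝ} (hρ : 0 < ρ) :
    1 - Real.log (1 + slinr g h σ q k) ≤ ρ * mse g h σ q k u - Real.log ρ := by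
  have hA := Apow_pos g h hσ q k
  have hD := Dpow_pos g h hσ q k
  have hDA : 0 < Dpow g h σ q k / Apow g h σ q k := div_pos hD hA
  have hm := mse_ge g h hσ q k u
  have hmpos : 0 < mse g h σ q k u := lt_of_lt_of_le hDA hm
  have hlog : Real.log (ρ * mse g h σ q k u) ≤ ρ * mse g h σ q k u - 1 :=
    Real.log_le_sub_one_of_pos (mul_pos hρ hmpos)
  rw [Real.log_mul (ne_of_gt hρ) (ne_of_gt hmpos)] at hlog
  have hlog2 : Real.log (Dpow g h σ q k / Apow g h σ q k) ≤ Real.log (mse g h σ q k u) :=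
    Real.log_le_log hDA hm
  have h1s : 1 + slinr g h σ q k = Apow g h σ q k / Dpow g h σ q k :=
    one_add_slinr g h hσ q k
  have hinv : Real.log (1 + slinr g h σ q k) = - Real.log (Dpow g h σ q k / Apow g h σ q k) := by
    rw [h1s, ← Real.log_inv]
    congr 1
    rw [inv_div]
  rw [hinv]
  linarith

lemma term_star (hσ : 0 < σ) (q : S → EuclideanSpace ℂ (Fin n)) (k : S) :
    (1 + slinr g h σ q k) * mse g h σ q k (bCoef g q k / ((Apow g h σ q k : ℝ) : ℂ)) -
      Real.log (1 + slinr g h σ q k) = 1 - Real.log (1 + slinr g h σ q k) := by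
  have hA := Apow_pos g h hσ q k
  have hD := Dpow_pos g h hσ q k
  rw [mse_star g h hσ q k, one_add_slinr g h hσ q k]
  rw [div_mul_div_comm, mul_comm (Dpow g h σ q k) (Apow g h σ q k),
    div_self (by positivity)]

lemma Jstar_eq (hσ : 0 < σ) (w : S → ℝ) (q : S → EuclideanSpace ℂ (Fin n)) :
    Jobj g h σ w (fun k => 1 + slinr g h σ q k)
        (fun k => bCoef g q k / ((Apow g h σ q k : ℝ) : ℂ)) q =
      (∑ k, w k) - ∑ k, w k * Real.log (1 + slinr g h σ q k) := by
  unfold Jobj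
  rw [← Finset.sum_sub_distrib]
  apply Finset.sum_congr rfl
  intro k _
  rw [term_star g h hσ q k]
  ring

lemma Jobj_ge (hσ : 0 < σ) (w : S → ℝ) (hw : ∀ k, 0 < w k)
    (q : S → EuclideanSpace ℂ (Fin n)) (u : S → ℂ) (ρ : S → ℝ) (hρ : ∀ k, 0 < ρ k) :
    (∑ k, w k) - (∑ k, w k * Real.log (1 + slinr g h σ q k)) ≤ Jobj g h σ w ρ u q := by
  unfold Jobj
  rw [← Finset.sum_sub_distrib]
  apply Finset.sum_le_sum
  intro k _
  have := term_ge g h hσ q k (u k) (hρ k)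
  have hwk := (hw k).le
  nlinarith

end aux

lemma ereal_sub_sub_cancel (c : ℝ) {P : EReal} (hP : P ≠ ⊥) :
    (c : EReal) - ((c : EReal) - P) = P := by
  induction P using EReal.rec with
  | bot => exact absurd rfl hP
  | coe p => rw [← EReal.coe_sub, ← EReal.coe_sub]; norm_num
  | top => simp


/-- Proposition 1 (WMMSE equivalence), instantaneous cluster-wise pseudo-SE setup.
For any nonempty set `F` of precoder tuples,
`sup_{q̄∈F} ∑_k w_k log(1 + SLINR_k(q̄)) = ∑_k w_k - inf { J(ρ,u,q̄) }` (in extended reals),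
and `q̄* ∈ F` attains the supremum of the weighted sum pseudo-SE over `F` iff the infimum
of `J` over `F × ℂ^S × (0,∞)^S` is attained at `(ρ*, u*, q̄*)` with
`u*_k = b_k(q̄*)/A_k(q̄*)` and `ρ*_k = 1 + SLINR_k(q̄*)`. -/
theorem wmmse_equivalence (g : S → EuclideanSpace ℂ (Fin n))
    (h : S' → EuclideanSpace ℂ (Fin n)) (σ : ℝ) (hσ : 0 < σ)
    (w : S → ℝ) (hw : ∀ k, 0 < w k)
    (F : Set (S → EuclideanSpace ℂ (Fin n))) (hF : F.Nonempty) :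
    (sSup ((fun q => (((∑ k, w k * Real.log (1 + slinr g h σ q k)) : ℝ) : EReal)) '' F) =
      (((∑ k, w k) : ℝ) : EReal) -
        sInf {x : EReal | ∃ q ∈ F, ∃ u : S → ℂ, ∃ ρ : S → ℝ,
          (∀ k, 0 < ρ k) ∧ x = ((Jobj g h σ w ρ u q : ℝ) : EReal)}) ∧
    ∀ qstar ∈ F,
      ((∀ q ∈ F, (∑ k, w k * Real.log (1 + slinr g h σ q k)) ≤
          ∑ k, w k * Real.log (1 + slinr g h σ qstar k)) ↔
        (∀ q ∈ F, ∀ u : S → ℂ, ∀ ρ : S → ℝ, (∀ k, 0 < ρ k) →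
          Jobj g h σ w (fun k => 1 + slinr g h σ qstar k)
              (fun k => bCoef g qstar k / ((Apow g h σ qstar k : ℝ) : ℂ)) qstar ≤
            Jobj g h σ w ρ u q)) := by
  set c : ℝ := ∑ k, w k with hc
  set f : (S → EuclideanSpace ℂ (Fin n)) → ℝ :=
    fun q => ∑ k, w k * Real.log (1 + slinr g h σ q k) with hf
  set T : Set EReal := {x : EReal | ∃ q ∈ F, ∃ u : S → ℂ, ∃ ρ : S → ℝ,
    (∀ k, 0 < ρ k) ∧ x = ((Jobj g h σ w ρ u q : ℝ) : EReal)} with hT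
  -- positivity of ρ*
  have hρstar : ∀ q : S → EuclideanSpace ℂ (Fin n), ∀ k : S, 0 < 1 + slinr g h σ q k := by
    intro q k
    have hD := Dpow_pos g h hσ q k
    have : 0 ≤ slinr g h σ q k := div_nonneg (sq_nonneg _) hD.le
    linarith
  -- J at the star point equals c - f q
  have hJstar : ∀ q : S → EuclideanSpace ℂ (Fin n),
      Jobj g h σ w (fun k => 1 + slinr g h σ q k)
        (fun k => bCoef g q k / ((Apow g h σ q k : ℝ) : ℂ)) q = c - f q :=
    fun q => Jstar_eq g h hσ w q
  -- J lower bound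
  have hJge : ∀ q : S → EuclideanSpace ℂ (Fin n), ∀ u : S → ℂ, ∀ ρ : S → ℝ,
      (∀ k, 0 < ρ k) → c - f q ≤ Jobj g h σ w ρ u q :=
    fun q u ρ hρ => Jobj_ge g h hσ w hw q u ρ hρ
  -- star point is in T
  have hstarT : ∀ q ∈ F, (((c - f q : ℝ)) : EReal) ∈ T := by
    intro q hq
    exact ⟨q, hq, _, _, hρstar q, by rw [hJstar q]⟩
  constructor
  · -- the sup-inf identity
    set P : EReal := sSup ((fun q => ((f q : ℝ) : EReal)) '' F) with hP
    have hPbot : P ≠ ⊥ := by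
      obtain ⟨q0, hq0⟩ := hF
      have : ((f q0 : ℝ) : EReal) ≤ P := le_sSup ⟨q0, hq0, rfl⟩
      intro hb
      rw [hb, le_bot_iff] at this
      exact EReal.coe_ne_bot _ this
    apply le_antisymm
    · apply sSup_le
      rintro x ⟨q, hq, rfl⟩
      have h1 : sInf T ≤ (((c - f q : ℝ)) : EReal) := sInf_le (hstarT q hq)
      have h2 : (c : EReal) - (((c - f q : ℝ)) : EReal) ≤ (c : EReal) - sInf T :=
        EReal.sub_le_sub le_rfl h1
      calc ((f q : ℝ) : EReal) = (c : EReal) - (((c - f q : ℝ)) : EReal) := by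
            rw [← EReal.coe_sub]; norm_num
        _ ≤ (c : EReal) - sInf T := h2
    · have key : (c : EReal) - P ≤ sInf T := by
        apply le_sInf
        rintro x ⟨q, hq, u, ρ, hρ, rfl⟩
        have h1 : ((f q : ℝ) : EReal) ≤ P := le_sSup ⟨q, hq, rfl⟩
        calc (c : EReal) - P ≤ (c : EReal) - ((f q : ℝ) : EReal) :=
              EReal.sub_le_sub le_rfl h1
          _ = (((c - f q : ℝ)) : EReal) := by rw [← EReal.coe_sub]
          _ ≤ ((Jobj g h σ w ρ u q : ℝ) : EReal) := EReal.coe_le_coe_iff.mpr (hJge q u ρ hρ)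
      calc (c : EReal) - sInf T ≤ (c : EReal) - ((c : EReal) - P) :=
            EReal.sub_le_sub le_rfl key
        _ = P := ereal_sub_sub_cancel c hPbot
  · -- the attainment equivalence
    intro qstar hqstar
    constructor
    · intro hmax q hq u ρ hρ
      have h1 : c - f qstar ≤ c - f q := by
        have := hmax q hq
        simp only [hf]
        linarith [hmax q hq]
      calc Jobj g h σ w (fun k => 1 + slinr g h σ qstar k)
            (fun k => bCoef g qstar k / ((Apow g h σ qstar k : ℝ) : ℂ)) qstar
          = c - f qstar := hJstar qstar
        _ ≤ c - f q := h1
        _ ≤ Jobj g h σ w ρ u q := hJge q u ρ hρ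
    · intro hJ q hq
      have h1 := hJ q hq (fun k => bCoef g q k / ((Apow g h σ q k : ℝ) : ℂ))
        (fun k => 1 + slinr g h σ q k) (hρstar q)
      rw [hJstar qstar, hJstar q] at h1
      linarith

end
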